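/- Any functor from the category of groups to the category of finite groups is isomorphic to a constant functor. -/

import Mathlib

open CategoryTheory

universe u

namespace Stmt5Aux

/-- Reindexing monoid hom on `ℕ → G` along a partial map of indices. -/
def reFun (G : Type u) [Group G] (u : ℕ → Option ℕ) : (ℕ → G) →* (ℕ → G) where
  toFun g j := ((u j).map g).getD 1
  map_one' := by funext j; cases h : u j <;> simp [h]
  map_mul' a b := by funext j; cases h : u j <;> simp [h]

variable (G : GrpCat.{u})

abbrev L : GrpCat.{u} := GrpCat.of (ℕ → G)

def dbl : L G ⟶ L G := GrpCat.ofHom <| reFun G (fun j => if j % 2 = 0 then some (j / 2) else none)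
def half : L G ⟶ L G := GrpCat.ofHom <| reFun G (fun i => some (2 * i))
def dblo : L G ⟶ L G := GrpCat.ofHom <| reFun G (fun j => if j % 2 = 1 then some (j / 2) else none)
def halfo : L G ⟶ L G := GrpCat.ofHom <| reFun G (fun i => some (2 * i + 1))
def pe : L G ⟶ L G := GrpCat.ofHom <| reFun G (fun j => if j % 2 = 0 then some j else none)
def po : L G ⟶ L G := GrpCat.ofHom <| reFun G (fun j => if j % 2 = 1 then some j else none)

lemma dbl_half : dbl G ≫ half G = 𝟙 (L G) := by
  ext x
  rename_i i
  show ((reFun G _).comp (reFun G _)) x i = x i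
  simp [reFun, Nat.mul_div_cancel_left]

lemma half_dbl : half G ≫ dbl G = pe G := by
  ext x
  rename_i j
  show ((reFun G _).comp (reFun G _)) x j = reFun G _ x j
  by_cases h : j % 2 = 0 <;> simp [reFun, h]
  congr 1
  omega

lemma dblo_halfo : dblo G ≫ halfo G = 𝟙 (L G) := by
  ext x
  rename_i i
  show ((reFun G _).comp (reFun G _)) x i = x i
  simp [reFun, Nat.mul_add_mod]
  congr 1
  omega

lemma halfo_dblo : halfo G ≫ dblo G = po G := by
  ext x
  rename_i j
  show ((reFun G _).comp (reFun G _)) x j = reFun G _ x j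
  by_cases h : j % 2 = 1 <;> simp [reFun, h]
  congr 1
  omega

lemma pe_po (x : L G) (j : ℕ) : (pe G ≫ po G) x j = 1 := by
  show ((reFun G _).comp (reFun G _)) x j = 1
  by_cases h : j % 2 = 1 <;> simp [reFun, h]


abbrev FinGrpCat := ObjectProperty.FullSubcategory (fun G : GrpCat.{u} => Finite G)

lemma flip_id {X : GrpCat.{u}} (hfin : Finite X) (A B : X ⟶ X) (h : A ≫ B = 𝟙 X) :
    B ≫ A = 𝟙 X := by
  have happ : ∀ x : X, B (A x) = x := fun x => by
    have := ConcreteCategory.congr_hom h x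
    simpa using this
  have hinj : Function.Injective (A : X → X) := fun a b hab => by
    rw [← happ a, ← happ b, hab]
  have hsurj := Finite.injective_iff_surjective.mp hinj
  ext x
  obtain ⟨y, rfl⟩ := hsurj x
  show A (B (A y)) = A y
  rw [happ y]

def eL : L G ⟶ L G := GrpCat.ofHom <| reFun G (fun _ => none)

lemma pe_po' : pe G ≫ po G = eL G := by
  ext x
  rename_i j
  exact pe_po G x j

def emb : G ⟶ L G := GrpCat.ofHom <| MonoidHom.mulSingle (fun _ : ℕ => G) 0

def proj : L G ⟶ G := GrpCat.ofHom <| Pi.evalMonoidHom (fun _ : ℕ => G) 0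

lemma emb_proj : emb G ≫ proj G = 𝟙 G := by
  ext x
  show (Pi.evalMonoidHom (fun _ : ℕ => G) 0) ((MonoidHom.mulSingle (fun _ : ℕ => G) 0) x) = x
  simp

lemma flip_idF (F : GrpCat.{u} ⥤ FinGrpCat.{u}) {X : GrpCat.{u}} (A B : X ⟶ X)
    (h : F.map A ≫ F.map B = 𝟙 (F.obj X)) : F.map B ≫ F.map A = 𝟙 (F.obj X) := by
  have hfin : Finite ((F.obj X).obj : GrpCat.{u}) := (F.obj X).property
  ext1
  exact flip_id hfin (F.map A).hom (F.map B).hom (congrArg InducedCategory.Hom.hom h)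

lemma map_trivial (F : GrpCat.{u} ⥤ FinGrpCat.{u}) {G : GrpCat.{u}} (e : G ⟶ G)
    (he : ∀ x, e x = 1) : F.map e = 𝟙 (F.obj G) := by
  have h1 : F.map (dbl G) ≫ F.map (half G) = 𝟙 (F.obj (L G)) := by
    rw [← F.map_comp, dbl_half, F.map_id]
  have h2 : F.map (pe G) = 𝟙 (F.obj (L G)) := by
    rw [← half_dbl, F.map_comp]
    exact flip_idF F _ _ h1
  have h3 : F.map (dblo G) ≫ F.map (halfo G) = 𝟙 (F.obj (L G)) := by
    rw [← F.map_comp, dblo_halfo, F.map_id]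
  have h4 : F.map (po G) = 𝟙 (F.obj (L G)) := by
    rw [← halfo_dblo, F.map_comp]
    exact flip_idF F _ _ h3
  have h5 : F.map (eL G) = 𝟙 (F.obj (L G)) := by
    rw [← pe_po', F.map_comp, h2, h4, Category.comp_id]
  have hcomm : emb G ≫ eL G = e ≫ emb G := by
    ext x
    rename_i j
    have lhs : (emb G ≫ eL G) x j = 1 := rfl
    have rhs : (e ≫ emb G) x j = 1 := by
      show (emb G) (e x) j = 1
      rw [he x, map_one]
      rfl
    rw [lhs, rhs]
  have hF : F.map e ≫ F.map (emb G) = F.map (emb G) := by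
    rw [← F.map_comp, ← hcomm, F.map_comp, h5, Category.comp_id]
  have hmono : F.map (emb G) ≫ F.map (proj G) = 𝟙 (F.obj G) := by
    rw [← F.map_comp, emb_proj, F.map_id]
  haveI : IsSplitMono (F.map (emb G)) := IsSplitMono.mk' ⟨F.map (proj G), hmono⟩
  exact (cancel_mono (F.map (emb G))).mp (by rw [hF, Category.id_comp])

end Stmt5Aux

open Stmt5Aux in
theorem stmt_5 (F : GrpCat.{u} ⥤ ObjectProperty.FullSubcategory (fun G : GrpCat.{u} => Finite G)) :
    ∃ d, Nonempty (F ≅ (Functor.const GrpCat.{u}).obj d) := by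
  let T : GrpCat.{u} := GrpCat.of PUnit
  let toT : ∀ G : GrpCat.{u}, G ⟶ T := fun G => GrpCat.ofHom (1 : G →* PUnit)
  let fromT : ∀ G : GrpCat.{u}, T ⟶ G := fun G => GrpCat.ofHom (1 : PUnit →* G)
  have hT : ∀ (G : GrpCat.{u}) (f g : G ⟶ T), f = g := by
    intro G f g
    ext x
  have htriv : ∀ G : GrpCat.{u}, ∀ x : G, (toT G ≫ fromT G) x = 1 := by
    intro G x
    rfl
  refine ⟨F.obj T, ⟨NatIso.ofComponents
    (fun G => ⟨F.map (toT G), F.map (fromT G), ?_, ?_⟩) ?_⟩⟩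
  · rw [← F.map_comp]
    exact map_trivial F _ (htriv G)
  · rw [← F.map_comp, hT T (fromT G ≫ toT G) (𝟙 T), F.map_id]
    rfl
  · intro X Y f
    show F.map f ≫ F.map (toT Y) = F.map (toT X) ≫ _
    rw [← F.map_comp, hT X (f ≫ toT Y) (toT X)]
    simp
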